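/- For every integer n ≥ 0, the product {n+1}·{n}!·{n}! divides {2n}! in Z[s,t], and the quotient, i.e. the Lucas-Catalan polynomial C_{n} = (1/{n+1})·{2n choose n}_L, is a polynomial in s and t all of whose coefficients are nonnegative integers. -/
import Mathlib


open MvPolynomial Finset

noncomputable section

/-- Polynomial ring ℤ[s,t] with s = X 0, t = X 1. -/
abbrev P2 : Type := MvPolynomial (Fin 2) ℤ

def ps : P2 := X 0
def pt : P2 := X 1

/-- The Lucas sequence of polynomials: {0}=0, {1}=1, {n}=s{n-1}+t{n-2}. -/
def lucas : ℕ → P2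
  | 0 => 0
  | 1 => 1
  | (n+2) => ps * lucas (n+1) + pt * lucas n

/-- The Lucastorial {n}! = {1}{2}⋯{n}. -/
def lucasFact (n : ℕ) : P2 := ∏ i ∈ Finset.range n, lucas (i+1)

/-- The d-divisible Lucastorial {n:d}! = {d}{2d}⋯{nd}. -/
def lucasFactD (d n : ℕ) : P2 := ∏ i ∈ Finset.range n, lucas (d*(i+1))

/-- A polynomial lies in ℕ[s,t]: all coefficients are nonnegative. -/
def Nonneg (p : P2) : Prop := ∀ m, 0 ≤ p.coeff m

/-- The fraction field ℤ(s,t). -/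
abbrev K : Type := FractionRing P2

def φ : P2 →+* K := algebraMap P2 K

def L (n : ℕ) : K := φ (lucas n)

def LFact (n : ℕ) : K := φ (lucasFact n)

def LFactD (d n : ℕ) : K := φ (lucasFactD d n)

/-- The Lucasnomial {n choose k}, as an element of the fraction field. -/
def lnom (n k : ℕ) : K := LFact n / (LFact k * LFact (n-k))

/-- The d-divisible Lucasnomial {n:d choose k:d}, as an element of the fraction field. -/
def lnomD (d n k : ℕ) : K := LFactD d n / (LFactD d k * LFactD d (n-k))

/-- The Lucas-Catalan number C_{n} = (1/{n+1}) {2n choose n}. -/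
def catL (n : ℕ) : K := lnom (2*n) n / L (n+1)

/-- The Lucas-Fuss-Catalan number C_{n,k} = (1/{kn+1}) {(k+1)n choose n}. -/
def fussCatL (n k : ℕ) : K := lnom ((k+1)*n) n / L (k*n+1)


/- ===== auxiliary development ===== -/

lemma lucas_zero : lucas 0 = 0 := rfl
lemma lucas_one : lucas 1 = 1 := rfl
lemma lucas_rec (n : ℕ) : lucas (n+2) = ps * lucas (n+1) + pt * lucas n := rfl

/-- Addition formula for Lucas polynomials. -/
lemma lucas_add (m n : ℕ) :
    lucas (m + n + 1) = lucas (m+1) * lucas (n+1) + pt * lucas m * lucas n := by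
  induction m using Nat.twoStepInduction generalizing n with
  | zero => simp [lucas_zero, lucas_one]
  | one =>
      have e : 1 + n + 1 = n + 2 := by omega
      have h2 : lucas 2 = ps := by rw [lucas_rec 0, lucas_one, lucas_zero]; ring
      rw [e, lucas_rec, h2, lucas_one]
      ring
  | more m ih1 ih2 =>
      have e : m + 2 + n + 1 = (m + n + 1) + 2 := by omega
      have a2 := ih2 n
      have e2 : m + 1 + n + 1 = m + n + 1 + 1 := by omega
      rw [e2] at a2
      rw [e, lucas_rec, ih1, a2, lucas_rec (m+1), lucas_rec m]
      ring

/-- shifted-by-one multiple of t: tl j = t·{j-1}, with tl 0 = 1 (= t·{-1}). -/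
def tl : ℕ → P2
  | 0 => 1
  | j+1 => pt * lucas j

/-- Lucasnomial coefficients, defined so as to be visibly in ℕ[s,t]. -/
def B : ℕ → ℕ → P2
  | _, 0 => 1
  | 0, _+1 => 0
  | n+1, k+1 => lucas (k+2) * B n (k+1) + tl (n-k) * B n k

lemma B_zero_right (n : ℕ) : B n 0 = 1 := by cases n <;> rfl
lemma B_zero_left (k : ℕ) : B 0 (k+1) = 0 := rfl
lemma B_succ (n k : ℕ) : B (n+1) (k+1) = lucas (k+2) * B n (k+1) + tl (n-k) * B n k := rfl

lemma B_of_lt : ∀ n k, n < k → B n k = 0 := by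
  intro n
  induction n with
  | zero => intro k h; match k, h with | k+1, _ => rfl
  | succ n ih =>
      intro k h
      match k, h with
      | k+1, h =>
        have hk : n < k := by omega
        rw [B_succ, ih _ (by omega), ih _ hk, Nat.sub_eq_zero_of_le (by omega)]
        simp [tl]

lemma B_diag : ∀ n, B n n = 1 := by
  intro n
  induction n with
  | zero => rfl
  | succ n ih =>
      rw [B_succ, B_of_lt n (n+1) (by omega), Nat.sub_self, ih]
      simp [tl]

lemma lucasFact_zero : lucasFact 0 = 1 := rfl
lemma lucasFact_succ (n : ℕ) : lucasFact (n+1) = lucasFact n * lucas (n+1) :=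
  Finset.prod_range_succ _ _

/-- Nonnegativity closure lemmas. -/
lemma nn_add {p q : P2} (hp : Nonneg p) (hq : Nonneg q) : Nonneg (p + q) := by
  intro m; rw [coeff_add]; exact add_nonneg (hp m) (hq m)

lemma nn_mul {p q : P2} (hp : Nonneg p) (hq : Nonneg q) : Nonneg (p * q) := by
  intro m
  rw [coeff_mul]
  exact Finset.sum_nonneg fun x _ => mul_nonneg (hp _) (hq _)

lemma nn_zero : Nonneg (0 : P2) := by intro m; simp
lemma nn_one : Nonneg (1 : P2) := by
  intro m; rw [coeff_one]; split <;> norm_num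

lemma nn_X (i : Fin 2) : Nonneg (X i : P2) := by
  intro m
  rw [MvPolynomial.coeff_X']
  split <;> norm_num

lemma nn_lucas : ∀ n, Nonneg (lucas n) := by
  intro n
  induction n using Nat.twoStepInduction with
  | zero => exact nn_zero
  | one => exact nn_one
  | more n ih1 ih2 =>
      rw [lucas_rec]
      exact nn_add (nn_mul (nn_X 0) ih2) (nn_mul (nn_X 1) ih1)

lemma nn_tl : ∀ j, Nonneg (tl j) := by
  intro j
  cases j with
  | zero => exact nn_one
  | succ j => exact nn_mul (nn_X 1) (nn_lucas j)

lemma nn_B : ∀ n k, Nonneg (B n k) := by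
  intro n
  induction n with
  | zero =>
      intro k; cases k with
      | zero => exact nn_one
      | succ k => rw [B_zero_left]; exact nn_zero
  | succ n ih =>
      intro k; cases k with
      | zero => rw [B_zero_right]; exact nn_one
      | succ k =>
          rw [B_succ]
          exact nn_add (nn_mul (nn_lucas _) (ih (k+1))) (nn_mul (nn_tl _) (ih k))

/-- The key factorization: {k+j}! = B(k+j,k) · {k}! · {j}!. -/
lemma B_fact : ∀ n k j, k + j = n →
    lucasFact n = B n k * lucasFact k * lucasFact j := by
  intro n
  induction n using Nat.strong_induction_on with
  | _ n ih =>
    intro k j hkj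
    match k, j with
    | 0, j =>
        have : j = n := by omega
        subst this
        rw [B_zero_right, lucasFact_zero]; ring
    | k+1, 0 =>
        have : k + 1 = n := by omega
        subst this
        rw [B_diag, lucasFact_zero]; ring
    | l+1, i+1 =>
        have hn : n = (l + i + 1) + 1 := by omega
        subst hn
        have h1 : lucasFact (l+i+1) = B (l+i+1) (l+1) * lucasFact (l+1) * lucasFact i :=
          ih (l+i+1) (by omega) (l+1) i (by omega)
        have h2 : lucasFact (l+i+1) = B (l+i+1) l * lucasFact l * lucasFact (i+1) :=
          ih (l+i+1) (by omega) l (i+1) (by omega)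
        have hB : B ((l+i+1)+1) (l+1)
            = lucas (l+2) * B (l+i+1) (l+1) + (pt * lucas i) * B (l+i+1) l := by
          rw [B_succ]
          have : l + i + 1 - l = i + 1 := by omega
          rw [this]; rfl
        have hadd : lucas ((l+i+1)+1) = lucas (l+2) * lucas (i+1) + pt * lucas (l+1) * lucas i := by
          have := lucas_add (l+1) i
          have e : l + 1 + i + 1 = (l+i+1)+1 := by omega
          rw [e] at this
          exact this
        rw [lucasFact_succ (l+i+1), hadd, hB,
            lucasFact_succ l, lucasFact_succ i] at *
        linear_combination lucas (l+2) * lucas (i+1) * h1 + pt * lucas (l+1) * lucas i * h2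

/-- {n+1}{n}!{n}! divides {2n}! with quotient (the Lucas-Catalan
polynomial) in ℕ[s,t]. -/
theorem lucasCatalan_nonneg (n : ℕ) :
    ∃ p : P2, Nonneg p ∧ lucasFact (2*n) = p * (lucas (n+1) * lucasFact n * lucasFact n) := by
  match n with
  | 0 =>
      refine ⟨1, nn_one, ?_⟩
      simp [lucasFact_zero, lucas_one]
  | 1 =>
      refine ⟨1, nn_one, ?_⟩
      have : 2 * 1 = 1 + 1 := rfl
      rw [this, lucasFact_succ, lucasFact_succ, lucasFact_zero, lucas_one]
      ring
  | (q+2) =>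
      refine ⟨B (2*q+3) (q+1) + pt * B (2*q+3) (q+3), nn_add (nn_B _ _) (nn_mul (nn_X 1) (nn_B _ _)), ?_⟩
      have h1 : lucasFact (2*q+3) = B (2*q+3) (q+1) * lucasFact (q+1) * lucasFact (q+2) :=
        B_fact (2*q+3) (q+1) (q+2) (by omega)
      have h2 : lucasFact (2*q+3) = B (2*q+3) (q+3) * lucasFact (q+3) * lucasFact q :=
        B_fact (2*q+3) (q+3) q (by omega)
      have hadd : lucas (2*q+4) = lucas (q+3) * lucas (q+2) + pt * lucas (q+2) * lucas (q+1) := by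
        have := lucas_add (q+2) (q+1)
        have e : q + 2 + (q+1) + 1 = 2*q+4 := by omega
        rw [e] at this
        exact this
      have e1 : 2 * (q+2) = (2*q+3) + 1 := by omega
      rw [e1, lucasFact_succ]
      have e2 : 2*q+3+1 = 2*q+4 := by omega
      rw [e2, hadd]
      have f3 : lucasFact (q+3) = lucasFact (q+2) * lucas (q+3) := lucasFact_succ _
      have f2 : lucasFact (q+2) = lucasFact (q+1) * lucas (q+2) := lucasFact_succ _
      have f1 : lucasFact (q+1) = lucasFact q * lucas (q+1) := lucasFact_succ _
      rw [f3] at h2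
      rw [f2] at h1 h2 ⊢
      rw [f1] at h1 h2 ⊢
      linear_combination lucas (q+3) * lucas (q+2) * h1 + pt * lucas (q+2) * lucas (q+1) * h2
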